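/- Let R_u be the rotation sending unit vector e to a positive multiple of e+u and fixing span{e,u}^⊥. For v orthogonal to both e and u, the directional derivative satisfies R_u^{-1} (∂R_u/∂v) = (1/√(1+‖u‖²))(v eᵀ - e vᵀ) + ((1 - √(1+‖u‖²))/(‖u‖²√(1+‖u‖²)))(v uᵀ - u vᵀ); in particular this is a skew-symmetric endomorphism. -/

import Mathlib

open RealInnerProductSpace

noncomputable section

variable {E : Type*} [NormedAddCommGroup E] [InnerProductSpace ℝ E]

/-- The rotation `R_u` sending the unit vector `e` to a positive multiple of `e + u` and
fixing `span{e,u}ᗮ` pointwise, given by its explicit formula, applied to `x`. -/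
def Rfun (e u x : E) : E :=
  x - ⟪e, x⟫ • e - (⟪u, x⟫ / ‖u‖ ^ 2) • u
    + (⟪e, x⟫ / Real.sqrt (1 + ‖u‖ ^ 2)) • (e + u)
    + (⟪u, x⟫ / (‖u‖ ^ 2 * Real.sqrt (1 + ‖u‖ ^ 2))) • (u - ‖u‖ ^ 2 • e)

/-- The skew-symmetric endomorphism
`(1/√(1+‖u‖²))(v eᵀ - e vᵀ) + ((1-√(1+‖u‖²))/(‖u‖²√(1+‖u‖²)))(v uᵀ - u vᵀ)` applied to `x`. -/
def skewPerp (e u v x : E) : E :=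
  (1 / Real.sqrt (1 + ‖u‖ ^ 2)) • (⟪e, x⟫ • v - ⟪v, x⟫ • e)
    + ((1 - Real.sqrt (1 + ‖u‖ ^ 2)) / (‖u‖ ^ 2 * Real.sqrt (1 + ‖u‖ ^ 2))) •
        (⟪u, x⟫ • v - ⟪v, x⟫ • u)

/-- For `v` orthogonal to both `e` and `u`, the directional derivative of `u ↦ R_u` in
direction `v` satisfies `R_u⁻¹ (∂R_u/∂v) = skewPerp`, i.e. `∂R_u/∂v = R_u ∘ skewPerp`;
in particular the endomorphism `skewPerp e u v` is skew-symmetric. -/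
theorem deriv_rotation_perp [FiniteDimensional ℝ E]
    (e u v : E) (he : ‖e‖ = 1) (hu : u ≠ 0) (heu : ⟪e, u⟫ = 0)
    (hev : ⟪e, v⟫ = 0) (huv : ⟪u, v⟫ = 0) :
    (∀ x : E, fderiv ℝ (fun u' => Rfun e u' x) u v = Rfun e u (skewPerp e u v x)) ∧
    (∀ x y : E, ⟪skewPerp e u v x, y⟫ = -⟪x, skewPerp e u v y⟫) := by
  have hn0 : (0:ℝ) < ‖u‖^2 := pow_pos (norm_pos_iff.2 hu) 2
  have hs0 : (0:ℝ) < Real.sqrt (1 + ‖u‖^2) := Real.sqrt_pos.2 (by positivity)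
  have hs2 : Real.sqrt (1 + ‖u‖^2) * Real.sqrt (1 + ‖u‖^2) = 1 + ‖u‖^2 :=
    Real.mul_self_sqrt (by positivity)
  constructor
  · intro x
    have Hn : HasFDerivAt (fun u' : E => ‖u'‖^2) (2 • (innerSL ℝ u)) u := by
      simpa using (hasFDerivAt_id u).norm_sq
    have Hix : HasFDerivAt (fun u' : E => ⟪u', x⟫) (innerSL ℝ x) u := by
      have h : (fun u' : E => ⟪u', x⟫) = ⇑(innerSL ℝ x) := by
        ext y; simp [real_inner_comm]
      rw [h]; exact (innerSL ℝ x).hasFDerivAt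
    have Hs := ((Hn.const_add 1).sqrt (by positivity : (1:ℝ) + ‖u‖^2 ≠ 0))
    have Hinvn := HasFDerivAt.comp u (hasDerivAt_inv hn0.ne').hasFDerivAt Hn
    have Hinvns := HasFDerivAt.comp u
      (hasDerivAt_inv (by positivity : ‖u‖^2 * Real.sqrt (1 + ‖u‖^2) ≠ 0)).hasFDerivAt (Hn.mul Hs)
    have Hinvs := HasFDerivAt.comp u (hasDerivAt_inv hs0.ne').hasFDerivAt Hs
    have Hg1 := (Hix.mul Hinvn).smul (hasFDerivAt_id u)
    have Hg2 := (Hinvs.const_mul (⟪e,x⟫:ℝ)).smul ((hasFDerivAt_const e u).add (hasFDerivAt_id u))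
    have Hg3 := (Hix.mul Hinvns).smul ((hasFDerivAt_id u).sub (Hn.smul (hasFDerivAt_const e u)))
    have H := ((((hasFDerivAt_const x u).sub ((hasFDerivAt_const (⟪e,x⟫:ℝ) u).smul_const e)).sub
        Hg1).add Hg2).add Hg3
    have key : HasFDerivAt (fun u' => Rfun e u' x) _ u := H
    rw [key.fderiv]
    have hee : ⟪e, e⟫ = (1:ℝ) := by rw [real_inner_self_eq_norm_sq, he]; norm_num
    have heu' : ⟪u, e⟫ = 0 := by rw [real_inner_comm]; exact heu
    have hev' : ⟪v, e⟫ = 0 := by rw [real_inner_comm]; exact hev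
    have huv' : ⟪v, u⟫ = 0 := by rw [real_inner_comm]; exact huv
    have huu : ⟪u, u⟫ = ‖u‖^2 := real_inner_self_eq_norm_sq u
    simp only [Rfun, skewPerp, inner_add_right, inner_sub_right, real_inner_smul_right,
      inner_add_left, inner_sub_left, real_inner_smul_left,
      heu, hev, huv, heu', hev', huv', real_inner_comm x e, real_inner_comm x u,
      real_inner_comm x v,
      hee, huu, ContinuousLinearMap.coe_sub', ContinuousLinearMap.coe_add',
      ContinuousLinearMap.coe_smul', ContinuousLinearMap.smulRight_apply,
      ContinuousLinearMap.comp_apply, ContinuousLinearMap.coe_id',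
      ContinuousLinearMap.zero_apply, ContinuousLinearMap.one_apply, innerSL_apply_apply,
      Pi.add_apply, Pi.sub_apply, Pi.smul_apply, Function.comp_apply, id_eq, smul_eq_mul,
      ContinuousLinearMap.toSpanSingleton_apply, Pi.mul_apply, Pi.smul_apply']
    clear H Hg1 Hg2 Hg3 Hinvn Hinvns Hinvs Hs Hn Hix key
    set s := Real.sqrt (1 + ‖u‖^2) with hs
    have hns : ‖u‖^2 = s*s - 1 := by rw [hs2]; ring
    have hsne : s ≠ 0 := hs0.ne'
    have h1 : s*s - 1 ≠ 0 := by rw [← hns]; exact hn0.ne'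
    have h2 : s^2 - 1 ≠ 0 := by rw [sq]; exact h1
    rw [hns]
    match_scalars <;> field_simp <;> ring
  · intro x y
    simp only [skewPerp, inner_add_left, inner_sub_left, real_inner_smul_left,
      inner_add_right, inner_sub_right, real_inner_smul_right,
      real_inner_comm x e, real_inner_comm x u, real_inner_comm x v,
      real_inner_comm y e, real_inner_comm y u, real_inner_comm y v]
    ring
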